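/- arXiv:2604.19843 — 2 statements merged into one kernel-verified Lean document; each statement's English description precedes it below -/
import Mathlib

section
/- Let n ≥ 1, let x₀ ∈ ℝⁿ, and let ν ∈ ℝⁿ be a unit vector. Suppose d : ℝⁿ → ℝ and 𝒩 : ℝⁿ → ℝ are twice continuously differentiable near x₀, h : ℝⁿ → ℝ is differentiable at x₀, d(x₀) = 0, and ∇d(x₀) = ν. Then the shielded envelope ℰ(x) = 𝒩(x) − d(x)·( ⟨∇𝒩(x), ∇d(x)⟩ − h(x) ) is differentiable at x₀ and satisfies ⟨∇ℰ(x₀), ν⟩ = h(x₀). -/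
open scoped RealInnerProductSpace

lemma inner_gradient_eq_fderiv {n : ℕ} (f : EuclideanSpace ℝ (Fin n) → ℝ)
    (x v : EuclideanSpace ℝ (Fin n)) :
    ⟪gradient f x, v⟫ = fderiv ℝ f x v := by
  rw [gradient]
  exact InnerProductSpace.toDual_symm_apply

lemma diffAt_gradient {n : ℕ} (x₀ : EuclideanSpace ℝ (Fin n))
    (f : EuclideanSpace ℝ (Fin n) → ℝ) (hf : ContDiffAt ℝ 2 f x₀) :
    DifferentiableAt ℝ (gradient f) x₀ := by
  have h1 : DifferentiableAt ℝ (fderiv ℝ f) x₀ :=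
    (hf.fderiv_right (m := 1) (by norm_num)).differentiableAt (by norm_num)
  exact ((InnerProductSpace.toDual ℝ (EuclideanSpace ℝ (Fin n))).symm.toContinuousLinearEquiv
    : (EuclideanSpace ℝ (Fin n) →L[ℝ] ℝ) ≃L[ℝ] EuclideanSpace ℝ (Fin n)).differentiableAt.comp x₀ h1

/-- Hard constraint for Neumann boundary conditions (envelope level): if `d` and `𝒩`
are twice continuously differentiable near `x₀`, `h` is differentiable at `x₀`,
`d(x₀) = 0` and `∇d(x₀) = ν` is a unit vector, then the shielded envelope
`ℰ(x) = 𝒩(x) − d(x)·(⟨∇𝒩(x), ∇d(x)⟩ − h(x))` is differentiable at `x₀` and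
`⟨∇ℰ(x₀), ν⟩ = h(x₀)`. -/
theorem stmt_11 (n : ℕ) (hn : 1 ≤ n) (x₀ ν : EuclideanSpace ℝ (Fin n))
    (hν : ‖ν‖ = 1) (d 𝒩 h : EuclideanSpace ℝ (Fin n) → ℝ)
    (hd : ContDiffAt ℝ 2 d x₀) (hN : ContDiffAt ℝ 2 𝒩 x₀)
    (hh : DifferentiableAt ℝ h x₀) (hd0 : d x₀ = 0) (hdgrad : gradient d x₀ = ν) :
    DifferentiableAt ℝ
      (fun x => 𝒩 x - d x * (⟪gradient 𝒩 x, gradient d x⟫ - h x)) x₀ ∧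
    ⟪gradient (fun x => 𝒩 x - d x * (⟪gradient 𝒩 x, gradient d x⟫ - h x)) x₀, ν⟫
      = h x₀ := by
  have hdD : DifferentiableAt ℝ d x₀ := hd.differentiableAt (by norm_num)
  have hND : DifferentiableAt ℝ 𝒩 x₀ := hN.differentiableAt (by norm_num)
  have hGN : DifferentiableAt ℝ (gradient 𝒩) x₀ := diffAt_gradient x₀ 𝒩 hN
  have hGd : DifferentiableAt ℝ (gradient d) x₀ := diffAt_gradient x₀ d hd
  set g : EuclideanSpace ℝ (Fin n) → ℝ :=
    fun x => ⟪gradient 𝒩 x, gradient d x⟫ - h x with hg_def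
  have hg : DifferentiableAt ℝ g x₀ := ((hGN.inner ℝ hGd).sub hh)
  have hE : DifferentiableAt ℝ (fun x => 𝒩 x - d x * g x) x₀ := hND.sub (hdD.mul hg)
  refine ⟨hE, ?_⟩
  rw [inner_gradient_eq_fderiv]
  have hf : fderiv ℝ (fun x => 𝒩 x - d x * g x) x₀ =
      fderiv ℝ 𝒩 x₀ - (d x₀ • fderiv ℝ g x₀ + g x₀ • fderiv ℝ d x₀) := by
    rw [fderiv_fun_sub hND (hdD.fun_mul hg), fderiv_fun_mul hdD hg]
  have hdν : fderiv ℝ d x₀ ν = 1 := by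
    rw [← inner_gradient_eq_fderiv, hdgrad, real_inner_self_eq_norm_sq, hν]; norm_num
  have hNν : fderiv ℝ 𝒩 x₀ ν = ⟪gradient 𝒩 x₀, ν⟫ := (inner_gradient_eq_fderiv _ _ _).symm
  have hgx : g x₀ = ⟪gradient 𝒩 x₀, ν⟫ - h x₀ := by rw [hg_def]; simp [hdgrad]
  rw [hf]
  simp only [ContinuousLinearMap.sub_apply, ContinuousLinearMap.add_apply, ContinuousLinearMap.smul_apply, smul_eq_mul, hd0, hdν, hNν, hgx]; ring
end

section
/- Let n ≥ 1, let x₀ ∈ ℝⁿ, and let ν ∈ ℝⁿ be a unit vector. Suppose d : ℝⁿ → ℝ, 𝒩 : ℝⁿ → ℝ, Φ : ℝⁿ → ℝ, and g_N : ℝⁿ → ℝ are twice continuously differentiable near x₀, that Φ is nonvanishing near x₀, d(x₀) = 0, and ∇d(x₀) = ν. Define h(x) = ( g_N(x) − 𝒩(x)·⟨∇Φ(x), ∇d(x)⟩ )/Φ(x), the shielded envelope ℰ(x) = 𝒩(x) − d(x)·( ⟨∇𝒩(x), ∇d(x)⟩ − h(x) ), and the predicted field û(x) = Φ(x)·ℰ(x).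 Then û is differentiable at x₀ and its normal derivative satisfies ⟨∇û(x₀), ν⟩ = g_N(x₀), i.e. the Neumann boundary condition holds exactly at x₀. -/
open scoped RealInnerProductSpace

section Aux

variable {F : Type*} [NormedAddCommGroup F] [InnerProductSpace ℝ F] [CompleteSpace F]

lemma inner_gradient_apply (f : F → ℝ) (x v : F) :
    ⟪gradient f x, v⟫ = fderiv ℝ f x v := by
  rw [gradient, InnerProductSpace.toDual_symm_apply]

lemma gradient_differentiableAt_of_contDiffAt {f : F → ℝ} {x : F}
    (hf : ContDiffAt ℝ 2 f x) : DifferentiableAt ℝ (fun y => gradient f y) x := by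
  have h1 : ContDiffAt ℝ 1 (fderiv ℝ f) x := hf.fderiv_right (by norm_num)
  have := ((InnerProductSpace.toDual ℝ F).symm.toContinuousLinearEquiv :
      StrongDual ℝ F ≃L[ℝ] F).differentiableAt.comp x
      (h1.differentiableAt (by norm_num))
  simpa [gradient, Function.comp_def] using this

end Aux

/-- Hard constraint for Neumann boundary conditions (field level): with
`h(x) = (g_N(x) − 𝒩(x)·⟨∇Φ(x), ∇d(x)⟩)/Φ(x)`, the shielded envelope
`ℰ(x) = 𝒩(x) − d(x)·(⟨∇𝒩(x), ∇d(x)⟩ − h(x))` and the predicted field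
`û = Φ·ℰ`, if `d(x₀) = 0` and `∇d(x₀) = ν` is a unit vector, `Φ` is nonvanishing
near `x₀`, and `d, 𝒩, Φ, g_N` are twice continuously differentiable near `x₀`, then
`û` is differentiable at `x₀` and `⟨∇û(x₀), ν⟩ = g_N(x₀)`. -/
theorem stmt_12 (n : ℕ) (hn : 1 ≤ n) (x₀ ν : EuclideanSpace ℝ (Fin n))
    (hν : ‖ν‖ = 1) (d 𝒩 Φ gN : EuclideanSpace ℝ (Fin n) → ℝ)
    (hd : ContDiffAt ℝ 2 d x₀) (hN : ContDiffAt ℝ 2 𝒩 x₀)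
    (hΦ : ContDiffAt ℝ 2 Φ x₀) (hgN : ContDiffAt ℝ 2 gN x₀)
    (hΦ0 : ∀ᶠ x in nhds x₀, Φ x ≠ 0)
    (hd0 : d x₀ = 0) (hdgrad : gradient d x₀ = ν) :
    DifferentiableAt ℝ
      (fun x => Φ x *
        (𝒩 x - d x * (⟪gradient 𝒩 x, gradient d x⟫ -
          (gN x - 𝒩 x * ⟪gradient Φ x, gradient d x⟫) / Φ x))) x₀ ∧
    ⟪gradient (fun x => Φ x *
        (𝒩 x - d x * (⟪gradient 𝒩 x, gradient d x⟫ -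
          (gN x - 𝒩 x * ⟪gradient Φ x, gradient d x⟫) / Φ x))) x₀, ν⟫
      = gN x₀ := by
  have one_le : (1 : WithTop ℕ∞) ≤ 2 := by norm_num
  have hΦx : Φ x₀ ≠ 0 := hΦ0.self_of_nhds
  have hd' : DifferentiableAt ℝ d x₀ := hd.differentiableAt (by norm_num)
  have hN' : DifferentiableAt ℝ 𝒩 x₀ := hN.differentiableAt (by norm_num)
  have hΦ' : DifferentiableAt ℝ Φ x₀ := hΦ.differentiableAt (by norm_num)
  have hgN' : DifferentiableAt ℝ gN x₀ := hgN.differentiableAt (by norm_num)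
  have hgd : DifferentiableAt ℝ (fun x => gradient d x) x₀ :=
    gradient_differentiableAt_of_contDiffAt hd
  have hgNgrad : DifferentiableAt ℝ (fun x => gradient 𝒩 x) x₀ :=
    gradient_differentiableAt_of_contDiffAt hN
  have hgΦ : DifferentiableAt ℝ (fun x => gradient Φ x) x₀ :=
    gradient_differentiableAt_of_contDiffAt hΦ
  set q : EuclideanSpace ℝ (Fin n) → ℝ := fun x =>
    ⟪gradient 𝒩 x, gradient d x⟫ -
      (gN x - 𝒩 x * ⟪gradient Φ x, gradient d x⟫) / Φ x with hq_def
  have hinner1 : DifferentiableAt ℝ (fun x => ⟪gradient 𝒩 x, gradient d x⟫) x₀ :=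
    DifferentiableAt.inner ℝ hgNgrad hgd
  have hinner2 : DifferentiableAt ℝ (fun x => ⟪gradient Φ x, gradient d x⟫) x₀ :=
    DifferentiableAt.inner ℝ hgΦ hgd
  have hq : DifferentiableAt ℝ q x₀ :=
    hinner1.sub (((hgN'.sub (hN'.mul hinner2)).mul (hΦ'.inv hΦx)).congr_of_eventuallyEq
      (by filter_upwards [hΦ0] with x hx; rw [div_eq_mul_inv]; rfl))
  set E : EuclideanSpace ℝ (Fin n) → ℝ := fun x => 𝒩 x - d x * q x with hE_def
  have hE : DifferentiableAt ℝ E x₀ := hN'.sub (hd'.mul hq)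
  have hU : DifferentiableAt ℝ (fun x => Φ x * E x) x₀ := hΦ'.mul hE
  refine ⟨hU, ?_⟩
  rw [inner_gradient_apply]
  have hdν : fderiv ℝ d x₀ ν = 1 := by
    rw [← inner_gradient_apply, hdgrad, real_inner_self_eq_norm_sq, hν]; norm_num
  have hfU : fderiv ℝ (fun x => Φ x * E x) x₀ =
      Φ x₀ • fderiv ℝ E x₀ + E x₀ • fderiv ℝ Φ x₀ := fderiv_mul hΦ' hE
  have hfE : fderiv ℝ E x₀ = fderiv ℝ 𝒩 x₀ -
      (d x₀ • fderiv ℝ q x₀ + q x₀ • fderiv ℝ d x₀) := by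
    rw [hE_def]
    rw [fderiv_fun_sub (g := fun y => d y * q y) hN' (hd'.mul hq), fderiv_fun_mul hd' hq]
  have hEx : E x₀ = 𝒩 x₀ := by simp [hE_def, hd0]
  have hqx : q x₀ = ⟪gradient 𝒩 x₀, ν⟫ -
      (gN x₀ - 𝒩 x₀ * ⟪gradient Φ x₀, ν⟫) / Φ x₀ := by
    rw [hq_def]; simp [hdgrad]
  have hNν : fderiv ℝ 𝒩 x₀ ν = ⟪gradient 𝒩 x₀, ν⟫ := (inner_gradient_apply 𝒩 x₀ ν).symm
  have hΦν : fderiv ℝ Φ x₀ ν = ⟪gradient Φ x₀, ν⟫ := (inner_gradient_apply Φ x₀ ν).symm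
  rw [hfU]
  simp only [ContinuousLinearMap.add_apply, ContinuousLinearMap.smul_apply, hfE,
    ContinuousLinearMap.sub_apply, hdν, hd0, zero_smul, zero_add, hEx, hqx, hNν, hΦν,
    smul_eq_mul, mul_one]
  field_simp
  ring
end
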